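/- Let A be a unital C*-algebra, B a unital C*-subalgebra, E : A → B a unital positive linear map, and x ∈ A selfadjoint. For every b ∈ A with Im b strictly positive: b − x is invertible and −Im(E[(b − x)^{-1}]) is strictly positive; that is, the operator-valued Cauchy transform G_x(b) := E[(b − x)^{-1}] maps the operator upper half-plane ℍ⁺ into the operator lower half-plane ℍ⁻ := −ℍ⁺. -/

import Mathlib

noncomputable section

/-- The imaginary part `Im a = (a - a*)/(2i)` of an element of a complex star algebra. -/
def aIm {A : Type*} [NonUnitalRing A] [StarRing A] [Module ℂ A] (a : A) : A :=
  ((2 * Complex.I)⁻¹ : ℂ) • (a - star a)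

/-- `k > 0`: `k` is selfadjoint, nonnegative and invertible. -/
def StrictlyPos {A : Type*} [Ring A] [StarRing A] [PartialOrder A] (k : A) : Prop :=
  IsSelfAdjoint k ∧ 0 ≤ k ∧ IsUnit k

lemma expand_aux1 {A : Type*} [Ring A] [Algebra ℂ A] (h k j : A)
    (hjk : j * k = 1) (hkj : k * j = 1) :
    (h - Complex.I • k) * j * (h + Complex.I • k) = h * j * h + k := by
  have h1 : k * j * h = h := by rw [hkj, one_mul]
  have h2 : h * (j * k) = h := by rw [hjk, mul_one]
  have h3 : k * j * k = k := by rw [hkj, one_mul]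
  simp only [sub_mul, add_mul, mul_sub, mul_add, smul_mul_assoc, mul_smul_comm, smul_smul,
    mul_assoc, Complex.I_mul_I]
  simp only [← mul_assoc, h1, h3]
  simp only [mul_assoc, h2]
  match_scalars <;> simp [Complex.I_sq]

lemma expand_aux2 {A : Type*} [Ring A] [Algebra ℂ A] (h k j : A)
    (hjk : j * k = 1) (hkj : k * j = 1) :
    (h + Complex.I • k) * j * (h - Complex.I • k) = h * j * h + k := by
  have h1 : k * j * h = h := by rw [hkj, one_mul]
  have h2 : h * (j * k) = h := by rw [hjk, mul_one]
  have h3 : k * j * k = k := by rw [hkj, one_mul]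
  simp only [sub_mul, add_mul, mul_sub, mul_add, smul_mul_assoc, mul_smul_comm, smul_smul,
    mul_assoc, Complex.I_mul_I]
  simp only [← mul_assoc, h1, h3]
  simp only [mul_assoc, h2]
  match_scalars <;> simp [Complex.I_sq]

section auxs

variable {A : Type*} [CStarAlgebra A] [PartialOrder A] [StarOrderedRing A]

lemma aux_exists_eps {p : A} (hp : 0 ≤ p) (hu : IsUnit p) :
    ∃ r > 0, algebraMap ℝ A r ≤ p := by
  rcases subsingleton_or_nontrivial A with hA | hA
  · exact ⟨1, one_pos, le_of_eq (Subsingleton.elim _ _)⟩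
  refine (CFC.exists_pos_algebraMap_le_iff (IsSelfAdjoint.of_nonneg hp)).mpr fun y hy => ?_
  have h0 : (0:ℝ) ∉ spectrum ℝ p := spectrum.zero_notMem_iff ℝ |>.mpr hu
  exact lt_of_le_of_ne (spectrum_nonneg_of_nonneg hp hy) (fun h => h0 (h ▸ hy))

lemma aux_sa_map (E : A →ₗ[ℂ] A) (hEpos : ∀ a : A, 0 ≤ a → 0 ≤ E a)
    {a : A} (ha : IsSelfAdjoint a) : IsSelfAdjoint (E a) := by
  rw [← CFC.posPart_sub_negPart a ha, map_sub]
  exact (IsSelfAdjoint.of_nonneg (hEpos _ (CFC.posPart_nonneg a))).sub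
    (IsSelfAdjoint.of_nonneg (hEpos _ (CFC.negPart_nonneg a)))

lemma aux_star_map (E : A →ₗ[ℂ] A) (hEpos : ∀ a : A, 0 ≤ a → 0 ≤ E a)
    (a : A) : E (star a) = star (E a) := by
  have hμ : star (((2 * Complex.I)⁻¹ : ℂ)) = -((2 * Complex.I)⁻¹ : ℂ) := by
    simp [Complex.star_def, map_inv₀, map_mul, Complex.conj_I, mul_neg, inv_neg]
  obtain ⟨r, hr⟩ : ∃ r : A, r = ((2⁻¹ : ℂ)) • (a + star a) := ⟨_, rfl⟩
  obtain ⟨s, hs⟩ : ∃ s : A, s = ((2 * Complex.I)⁻¹ : ℂ) • (a - star a) := ⟨_, rfl⟩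
  have hrsa : IsSelfAdjoint r := by
    rw [IsSelfAdjoint, hr, star_smul, star_add, star_star]
    simp [add_comm]
  have hssa : IsSelfAdjoint s := by
    rw [IsSelfAdjoint, hs, star_smul, star_sub, star_star, hμ, neg_smul, ← smul_neg, neg_sub]
  have ha' : a = r + Complex.I • s := by
    rw [hr, hs, smul_smul]
    have h2 : Complex.I * (2 * Complex.I)⁻¹ = 2⁻¹ := by
      field_simp
    rw [h2, smul_add, smul_sub]
    module
  have hsa' : star a = r - Complex.I • s := by
    nth_rw 1 [ha']
    rw [star_add, hrsa.star_eq, star_smul, hssa.star_eq, Complex.star_def, Complex.conj_I,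
      neg_smul, ← sub_eq_add_neg]
  rw [hsa', ha', map_sub, map_add, map_smul, star_add, star_smul,
    (aux_sa_map E hEpos hrsa).star_eq, (aux_sa_map E hEpos hssa).star_eq, Complex.star_def,
    Complex.conj_I, neg_smul, ← sub_eq_add_neg]

end auxs


/-- For a unital positive map `E` from a C*-algebra `A` onto a C*-subalgebra `B` and
selfadjoint `x`, the Cauchy transform `G_x(b) = E[(b - x)⁻¹]` maps the operator upper
half-plane into the operator lower half-plane: for every `b` with `Im b > 0`, `b - x` is
invertible and `-Im E[(b - x)⁻¹] > 0`. -/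
theorem stmt_14 {A : Type*} [CStarAlgebra A] [PartialOrder A] [StarOrderedRing A]
    (B : StarSubalgebra ℂ A) (hBclosed : IsClosed (B : Set A))
    (E : A →ₗ[ℂ] A) (hErange : ∀ a : A, E a ∈ B)
    (hE1 : E 1 = 1) (hEpos : ∀ a : A, 0 ≤ a → 0 ≤ E a)
    (x : A) (hx : IsSelfAdjoint x) :
    ∀ b : A, StrictlyPos (aIm b) →
      IsUnit (b - x) ∧ StrictlyPos (-(aIm (E (Ring.inverse (b - x))))) := by
  intro b hb
  obtain ⟨k, hk⟩ : ∃ k : A, k = aIm b := ⟨_, rfl⟩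
  rw [← hk] at hb
  obtain ⟨hksa, hknn, hku⟩ := hb
  obtain ⟨c, hcdef⟩ : ∃ c : A, c = b - x := ⟨_, rfl⟩
  rw [← hcdef]
  have hImc : aIm c = k := by
    rw [hk, aIm, aIm, hcdef, star_sub, hx.star_eq, sub_sub_sub_cancel_right]
  -- inverse of k
  obtain ⟨j, hjdef⟩ : ∃ j : A, j = (↑hku.unit⁻¹ : A) := ⟨_, rfl⟩
  have hj0 : 0 ≤ j := by
    rw [hjdef]
    exact CFC.inv_nonneg_of_nonneg hku.unit (by rw [hku.unit_spec]; exact hknn)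
  have hjk : j * k = 1 := hjdef ▸ hku.val_inv_mul
  have hkj : k * j = 1 := hjdef ▸ hku.mul_val_inv
  -- decomposition c = h + i k
  have hcsub : c - star c = (2 * Complex.I) • k := by
    calc c - star c = (2 * Complex.I) • (((2 * Complex.I)⁻¹ : ℂ) • (c - star c)) := by
          rw [smul_smul, mul_inv_cancel₀ (by simp [Complex.I_ne_zero]), one_smul]
      _ = (2 * Complex.I) • k := by rw [← aIm, hImc]
  obtain ⟨h, hh⟩ : ∃ h : A, h = c - Complex.I • k := ⟨_, rfl⟩
  have hcc : c = h + Complex.I • k := by rw [hh]; abel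
  have hstarc : star c = h - Complex.I • k := by
    have h1 : star c = c - (2 * Complex.I) • k := by rw [← hcsub]; abel
    rw [h1, hh]
    module
  have hhsa : IsSelfAdjoint h := by
    rw [IsSelfAdjoint, hh, star_sub, hstarc, star_smul, Complex.star_def, Complex.conj_I,
      hksa.star_eq, neg_smul, hh]
    module
  -- invertibility of c
  have exp1 : star c * j * c = h * j * h + k := by
    rw [hstarc, hcc]; exact expand_aux1 h k j hjk hkj
  have exp2 : c * j * star c = h * j * h + k := by
    rw [hstarc, hcc]; exact expand_aux2 h k j hjk hkj
  have hconj0 : 0 ≤ h * j * h := by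
    have := star_left_conjugate_nonneg hj0 h
    rwa [hhsa.star_eq] at this
  have hle1 : k ≤ star c * j * c := by rw [exp1]; exact le_add_of_nonneg_left hconj0
  have hle2 : k ≤ c * j * star c := by rw [exp2]; exact le_add_of_nonneg_left hconj0
  have hu1 : IsUnit (star c * j * c) := CStarAlgebra.isUnit_of_le k hle1 (hku.isStrictlyPositive hknn)
  have hu2 : IsUnit (c * j * star c) := CStarAlgebra.isUnit_of_le k hle2 (hku.isStrictlyPositive hknn)
  have hcu : IsUnit c := by
    obtain ⟨l, hl1, hl2⟩ := isUnit_iff_exists.mp hu1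
    obtain ⟨r, hr1, hr2⟩ := isUnit_iff_exists.mp hu2
    have hLc : (l * (star c * j)) * c = 1 := by simpa only [mul_assoc] using hl2
    have hcR : c * (j * (star c * r)) = 1 := by simpa only [mul_assoc] using hr1
    refine isUnit_iff_exists.mpr ⟨j * (star c * r), hcR, ?_⟩
    have hRL : j * (star c * r) = l * (star c * j) := by
      calc j * (star c * r) = 1 * (j * (star c * r)) := (one_mul _).symm
        _ = ((l * (star c * j)) * c) * (j * (star c * r)) := by rw [hLc]
        _ = (l * (star c * j)) * (c * (j * (star c * r))) := by simp only [mul_assoc]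
        _ = l * (star c * j) := by rw [hcR, mul_one]
    rw [hRL]
    exact hLc
  refine ⟨hcu, ?_⟩
  -- the inverse and its imaginary part
  obtain ⟨ci, hcidef⟩ : ∃ ci : A, ci = Ring.inverse c := ⟨_, rfl⟩
  rw [← hcidef]
  have hci1 : ci * c = 1 := hcidef ▸ Ring.inverse_mul_cancel c hcu
  have hci2 : c * ci = 1 := hcidef ▸ Ring.mul_inverse_cancel c hcu
  have hsci1 : star c * star ci = 1 := by
    have := congrArg star hci1; rwa [star_mul, star_one] at this
  have hsci2 : star ci * star c = 1 := by
    have := congrArg star hci2; rwa [star_mul, star_one] at this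
  have hdiff : ci - star ci = ci * (star c - c) * star ci := by
    have hexp : ci * (star c - c) * star ci = ci * (star c * star ci) - ci * c * star ci := by
      noncomm_ring
    rw [hexp, hsci1, mul_one, hci1, one_mul]
  have hneg : ((2 * Complex.I)⁻¹ : ℂ) • (star c - c) = -k := by
    rw [← hImc, aIm, ← smul_neg, neg_sub]
  have himinv : -(aIm ci) = ci * k * star ci := by
    rw [aIm, hdiff]
    have hpull : ((2 * Complex.I)⁻¹ : ℂ) • (ci * (star c - c) * star ci)
        = ci * (((2 * Complex.I)⁻¹ : ℂ) • (star c - c)) * star ci := by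
      simp only [smul_mul_assoc, mul_smul_comm]
    rw [hpull, hneg]
    simp [mul_neg, neg_mul]
  -- strict positivity of the conjugated element
  have hciu : IsUnit ci := isUnit_iff_exists.mpr ⟨c, hci1, hci2⟩
  have hp0 : 0 ≤ ci * k * star ci := star_right_conjugate_nonneg hknn ci
  have hpu : IsUnit (ci * k * star ci) := (hciu.mul hku).mul hciu.star
  -- push through E
  obtain ⟨r, hr, hrle⟩ := aux_exists_eps hp0 hpu
  have hmono : E (algebraMap ℝ A r) ≤ E (ci * k * star ci) :=
    sub_nonneg.mp (by rw [← map_sub]; exact hEpos _ (sub_nonneg.mpr hrle))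
  have hEalg : E (algebraMap ℝ A r) = algebraMap ℝ A r := by
    rw [IsScalarTower.algebraMap_apply ℝ ℂ A, Algebra.algebraMap_eq_smul_one, map_smul, hE1,
      ← Algebra.algebraMap_eq_smul_one, ← IsScalarTower.algebraMap_apply]
  have halgu : IsUnit (algebraMap ℝ A r) := (isUnit_iff_ne_zero.mpr hr.ne').map (algebraMap ℝ A)
  have halg0 : 0 ≤ algebraMap ℝ A r := by
    have hsq : algebraMap ℝ A r
        = star (algebraMap ℝ A (Real.sqrt r)) * algebraMap ℝ A (Real.sqrt r) := by
      rw [((IsSelfAdjoint.all (Real.sqrt r)).algebraMap A).star_eq, ← map_mul,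
        Real.mul_self_sqrt hr.le]
    rw [hsq]
    exact star_mul_self_nonneg _
  have hEp0 : 0 ≤ E (ci * k * star ci) := hEpos _ hp0
  have hEpu : IsUnit (E (ci * k * star ci)) :=
    CStarAlgebra.isUnit_of_le (algebraMap ℝ A r) (hEalg ▸ hmono) (halgu.isStrictlyPositive halg0)
  have hfinal : -(aIm (E ci)) = E (ci * k * star ci) := by
    rw [aIm, ← aux_star_map E hEpos, ← map_sub, ← map_smul, ← aIm, ← map_neg, himinv]
  rw [hfinal]
  exact ⟨IsSelfAdjoint.of_nonneg hEp0, hEp0, hEpu⟩
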